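/- Let X, Y ∈ Γ(AG). The unique map λ : D(2) → B(G) that coincides on the two axes of D(2) with d ↦ X_d and d′ ↦ Y_{d′} respectively is given by λ(d,d′) = X_d ∗ Y_{d′} = Y_{d′} ∗ X_d. Consequently, the tangent-vector sum satisfies (X + Y)_d = X_d ∗ Y_d = Y_d ∗ X_d for all d ∈ D. -/
import Mathlib


/-- The set `D = {d ∈ R | d² = 0}` of square-zero infinitesimals. -/
def Dinf (R : Type*) [CommRing R] : Type _ := {d : R // d * d = 0}

variable {R : Type*} [CommRing R]

/-- `0 ∈ D`. -/
def d0 : Dinf R := ⟨0, by simp⟩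

/-- in the synthetic setting, with `B = B(G)` a microlinear group
(microlinearity used through the hypothesis `hml2`: two maps on `D(2)` agreeing on
the axes coincide) and `X, Y ∈ Γ(AG)` regarded as tangent vectors `d ↦ X_d`,
`d ↦ Y_d` to `B(G)` at `id`, the unique map `λ : D(2) → B(G)` agreeing with `X`
and `Y` on the two axes is given by `λ(d,d′) = X_d ∗ Y_{d′} = Y_{d′} ∗ X_d`;
consequently `(X+Y)_d = λ(d,d) = X_d ∗ Y_d = Y_d ∗ X_d` for all `d ∈ D`. -/
theorem sum_of_tangent_vectors
    (R : Type*) [CommRing R] (B : Type*) [Group B]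
    (hml2 : ∀ f g : {p : Dinf R × Dinf R // p.1.1 * p.2.1 = 0} → B,
      (∀ d : Dinf R, f ⟨(d, d0), by simp [d0]⟩ = g ⟨(d, d0), by simp [d0]⟩) →
      (∀ d : Dinf R, f ⟨(d0, d), by simp [d0]⟩ = g ⟨(d0, d), by simp [d0]⟩) → f = g)
    (X Y : Dinf R → B) (hX : X d0 = 1) (hY : Y d0 = 1)
    (lam : {p : Dinf R × Dinf R // p.1.1 * p.2.1 = 0} → B)
    (hlX : ∀ d : Dinf R, lam ⟨(d, d0), by simp [d0]⟩ = X d)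
    (hlY : ∀ d : Dinf R, lam ⟨(d0, d), by simp [d0]⟩ = Y d) :
    (∀ p : {p : Dinf R × Dinf R // p.1.1 * p.2.1 = 0},
      lam p = X p.1.1 * Y p.1.2 ∧ lam p = Y p.1.2 * X p.1.1) ∧
    (∀ d : Dinf R, lam ⟨(d, d), d.2⟩ = X d * Y d ∧ lam ⟨(d, d), d.2⟩ = Y d * X d) := by
  have h1 : lam = fun p => X p.1.1 * Y p.1.2 := by
    apply hml2
    · intro d; simp [hlX d, hY]
    · intro d; simp [hlY d, hX]
  have h2 : lam = fun p => Y p.1.2 * X p.1.1 := by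
    apply hml2
    · intro d; simp [hlX d, hY]
    · intro d; simp [hlY d, hX]
  refine ⟨fun p => ⟨?_, ?_⟩, fun d => ⟨?_, ?_⟩⟩
  · rw [h1]
  · rw [h2]
  · rw [h1]
  · rw [h2]
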